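/- The smallest positive solution t₂ of cosh(t)·cos(t) = 1 satisfies t₂ > 3π/2. Moreover, for each integer k ≥ 2, the k-th positive solution t_k satisfies |t_k - (2k-1)π/2| ≤ π·exp(-(k-1)π). -/

import Mathlib

open Real Set

private lemma ccrl_eps_le (k : ℕ) (hk : 2 ≤ k) :
    π * Real.exp (-((k : ℝ) - 1) * π) ≤ 1 / 6 := by
  have h2 : (2 : ℝ) ≤ (k : ℝ) := by exact_mod_cast hk
  have hπ : (3.14 : ℝ) < π := Real.pi_gt_d2
  have hπ' : π < 3.15 := Real.pi_lt_d2
  have h1 : Real.exp (-((k : ℝ) - 1) * π) ≤ Real.exp (-3) := by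
    apply Real.exp_le_exp.2
    nlinarith
  have he : (2.7182818283 : ℝ) < Real.exp 1 := Real.exp_one_gt_d9
  have h3 : (20 : ℝ) < Real.exp 3 := by
    have h : Real.exp 3 = Real.exp 1 * Real.exp 1 * Real.exp 1 := by
      rw [← Real.exp_add, ← Real.exp_add]; norm_num
    nlinarith
  have hmul : Real.exp (-3) * Real.exp 3 = 1 := by
    rw [← Real.exp_add]; norm_num
  have h6 : Real.exp (-3) ≤ 1 / 20 := by nlinarith [Real.exp_pos (-3)]
  nlinarith [Real.exp_pos (-((k : ℝ) - 1) * π)]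

private lemma ccrl_exp_pi_half : (4 : ℝ) < Real.exp (π / 2) := by
  have hπ : (3.14 : ℝ) < π := Real.pi_gt_d2
  have he : (2.7182818283 : ℝ) < Real.exp 1 := Real.exp_one_gt_d9
  have h1 : Real.exp 1 * Real.exp 0.57 ≤ Real.exp (π / 2) := by
    rw [← Real.exp_add]; apply Real.exp_le_exp.2; linarith
  have h2 : (0.57 : ℝ) + 1 ≤ Real.exp 0.57 := Real.add_one_le_exp 0.57
  nlinarith [Real.exp_pos (0.57 : ℝ)]

private lemma ccrl_exp_a (k : ℕ) :
    Real.exp ((2 * (k : ℝ) - 1) * π / 2) * (π * Real.exp (-((k : ℝ) - 1) * π))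
      = π * Real.exp (π / 2) := by
  have h : (2 * (k : ℝ) - 1) * π / 2 + -((k : ℝ) - 1) * π = π / 2 := by ring
  calc Real.exp ((2 * (k : ℝ) - 1) * π / 2) * (π * Real.exp (-((k : ℝ) - 1) * π))
      = π * Real.exp ((2 * (k : ℝ) - 1) * π / 2 + -((k : ℝ) - 1) * π) := by
        rw [Real.exp_add]; ring
    _ = π * Real.exp (π / 2) := by rw [h]

private lemma ccrl_cos_shift (k : ℕ) (x : ℝ) :
    Real.cos ((2 * (k : ℝ) - 1) * π / 2 + x) = (-1) ^ k * Real.sin x := by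
  have h : (2 * (k : ℝ) - 1) * π / 2 + x = (k : ℝ) * π - (π / 2 - x) := by ring
  rw [h, Real.cos_nat_mul_pi_sub, Real.cos_pi_div_two_sub]

private lemma ccrl_sin_shift (k : ℕ) (x : ℝ) :
    Real.sin ((2 * (k : ℝ) - 1) * π / 2 + x) = -((-1) ^ k * Real.cos x) := by
  have h : (2 * (k : ℝ) - 1) * π / 2 + x = (k : ℝ) * π - (π / 2 - x) := by ring
  rw [h, Real.sin_nat_mul_pi_sub, Real.sin_pi_div_two_sub]

set_option maxHeartbeats 1000000 in
private lemma ccrl_hard (k : ℕ) (hk : 2 ≤ k) {u : ℝ}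
    (h1 : π * Real.exp (-((k : ℝ) - 1) * π) ≤ u) (h2 : u ≤ π / 2) :
    1 < Real.cosh ((2 * (k : ℝ) - 1) * π / 2 - u) * Real.sin u := by
  set ε := π * Real.exp (-((k : ℝ) - 1) * π) with hεdef
  set a := (2 * (k : ℝ) - 1) * π / 2 with hadef
  have hεpos : 0 < ε := by positivity
  have hεle : ε ≤ 1 / 6 := ccrl_eps_le k hk
  have hupos : 0 < u := lt_of_lt_of_le hεpos h1
  have hπ : (3.14 : ℝ) < π := Real.pi_gt_d2
  have hπ' : π < 3.15 := Real.pi_lt_d2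
  have hE : (4 : ℝ) < Real.exp (π / 2) := ccrl_exp_pi_half
  have hkey : Real.exp a * ε = π * Real.exp (π / 2) := ccrl_exp_a k
  have hcosh : Real.exp a * Real.exp (-u) / 2 ≤ Real.cosh (a - u) := by
    rw [Real.cosh_eq, ← Real.exp_add]
    have h3 := Real.exp_pos (-(a - u))
    have h : a + -u = a - u := by ring
    rw [h]
    linarith
  have hXpos : 0 < Real.exp a := Real.exp_pos a
  have hπE : (12.5 : ℝ) < π * Real.exp (π / 2) := by nlinarith
  have hcoshpos : (0 : ℝ) ≤ Real.cosh (a - u) := (Real.cosh_pos (a - u)).le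
  rcases le_or_gt u 1 with hu | hu
  · -- case u ≤ 1
    have hsin : u - u ^ 3 / 4 < Real.sin u := by
      have := Real.sin_gt_sub_cube hupos; linarith [pow_pos hupos 3]
    have hcube : u ^ 3 ≤ u := by
      nlinarith [mul_nonneg (mul_nonneg hupos.le hupos.le) (sub_nonneg.mpr hu),
        mul_nonneg hupos.le (sub_nonneg.mpr hu)]
    have hsin' : 3 / 4 * u ≤ Real.sin u := by linarith
    have hexpu : Real.exp (-1 : ℝ) ≤ Real.exp (-u) := Real.exp_le_exp.2 (by linarith)
    have he : Real.exp 1 < 2.7182818286 := Real.exp_one_lt_d9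
    have hmul : Real.exp (-1 : ℝ) * Real.exp 1 = 1 := by rw [← Real.exp_add]; norm_num
    have hinv : (0.36 : ℝ) ≤ Real.exp (-1 : ℝ) := by
      nlinarith [Real.exp_pos (-1 : ℝ), Real.exp_pos (1 : ℝ)]
    have hinv' : (0.36 : ℝ) ≤ Real.exp (-u) := le_trans hinv hexpu
    have hXu : Real.exp a * ε ≤ Real.exp a * u :=
      mul_le_mul_of_nonneg_left h1 hXpos.le
    have hB : Real.exp a * u * 0.36 ≤ Real.exp a * u * Real.exp (-u) := by
      have h0 : (0 : ℝ) ≤ Real.exp a * u := by positivity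
      nlinarith [mul_nonneg h0 (sub_nonneg.mpr hinv')]
    have step1 : Real.exp a * ε * 0.36 * (3 / 4) / 2 ≤
        Real.exp a * Real.exp (-u) / 2 * (3 / 4 * u) := by
      nlinarith [hXu, hB]
    have step2 : Real.exp a * Real.exp (-u) / 2 * (3 / 4 * u) ≤
        Real.cosh (a - u) * Real.sin u :=
      mul_le_mul hcosh hsin' (by linarith) hcoshpos
    linarith [step1, step2, hkey, hπE]
  · -- case 1 < u
    have hsin1 : (3 / 4 : ℝ) < Real.sin 1 := by
      have h := Real.sin_gt_sub_cube (by norm_num : (0:ℝ) < 1)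
      nlinarith
    have hmem1 : (1 : ℝ) ∈ Icc (-(π / 2)) (π / 2) := by
      constructor <;> linarith
    have hmemu : u ∈ Icc (-(π / 2)) (π / 2) := by
      constructor <;> linarith
    have hsinu : Real.sin 1 ≤ Real.sin u :=
      Real.strictMonoOn_sin.monotoneOn hmem1 hmemu hu.le
    have hsin' : (3 / 4 : ℝ) ≤ Real.sin u := by linarith
    have hexpu : Real.exp (-(π / 2)) ≤ Real.exp (-u) := Real.exp_le_exp.2 (by linarith)
    have hXF : Real.exp a * Real.exp (-(π / 2)) * ε = π := by
      have h : Real.exp a * Real.exp (-(π / 2)) * ε = Real.exp a * ε * Real.exp (-(π / 2)) := by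
        ring
      rw [h, hkey, mul_assoc, ← Real.exp_add]
      norm_num
    have hFpos : 0 < Real.exp a * Real.exp (-(π / 2)) := by positivity
    have hXFge : 6 * π ≤ Real.exp a * Real.exp (-(π / 2)) := by
      nlinarith [mul_le_mul_of_nonneg_left hεle hFpos.le]
    have hFu : Real.exp a * Real.exp (-(π / 2)) ≤ Real.exp a * Real.exp (-u) :=
      mul_le_mul_of_nonneg_left hexpu hXpos.le
    have step2 : Real.exp a * Real.exp (-(π / 2)) / 2 * (3 / 4) ≤
        Real.cosh (a - u) * Real.sin u :=
      mul_le_mul (by linarith) hsin' (by norm_num) hcoshpos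
    linarith

private lemma ccrl_G_pos {x : ℝ} (h1 : 0 < x) (h2 : x ≤ π) :
    0 < Real.cosh x * Real.sin x - Real.sinh x * Real.cos x := by
  have hmono : StrictMonoOn
      (fun y => Real.cosh y * Real.sin y - Real.sinh y * Real.cos y) (Icc 0 π) := by
    apply strictMonoOn_of_deriv_pos (convex_Icc 0 π) (by fun_prop)
    intro y hy
    rw [interior_Icc] at hy
    have hd : HasDerivAt (fun y => Real.cosh y * Real.sin y - Real.sinh y * Real.cos y)
        (Real.sinh y * Real.sin y + Real.cosh y * Real.cos y -
          (Real.cosh y * Real.cos y + Real.sinh y * -Real.sin y)) y :=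
      ((Real.hasDerivAt_cosh y).mul (Real.hasDerivAt_sin y)).sub
        ((Real.hasDerivAt_sinh y).mul (Real.hasDerivAt_cos y))
    rw [hd.deriv]
    have hs : 0 < Real.sin y := Real.sin_pos_of_pos_of_lt_pi hy.1 hy.2
    have hsh : 0 < Real.sinh y := Real.sinh_pos_iff.mpr hy.1
    nlinarith
  have h := hmono (Set.left_mem_Icc.mpr Real.pi_pos.le) ⟨h1.le, h2⟩ h1
  simpa using h

private lemma ccrl_lt_one {s : ℝ} (h1 : 0 < s) (h2 : s ≤ π) :
    Real.cosh s * Real.cos s < 1 := by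
  have hmono : StrictAntiOn (fun y => Real.cosh y * Real.cos y) (Icc 0 π) := by
    apply strictAntiOn_of_deriv_neg (convex_Icc 0 π) (by fun_prop)
    intro y hy
    rw [interior_Icc] at hy
    have hd : HasDerivAt (fun y => Real.cosh y * Real.cos y)
        (Real.sinh y * Real.cos y + Real.cosh y * -Real.sin y) y :=
      (Real.hasDerivAt_cosh y).mul (Real.hasDerivAt_cos y)
    rw [hd.deriv]
    have := ccrl_G_pos hy.1 hy.2.le
    linarith
  have h := hmono (Set.left_mem_Icc.mpr Real.pi_pos.le) ⟨h1.le, h2⟩ h1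
  simpa using h

private lemma ccrl_gt {s : ℝ} (h0 : 0 < s) (hs : Real.cosh s * Real.cos s = 1) :
    3 * π / 2 < s := by
  by_contra h
  push_neg at h
  rcases le_or_gt s π with h1 | h1
  · exact absurd hs (ne_of_lt (ccrl_lt_one h0 h1))
  · have hc : Real.cos s ≤ 0 :=
      Real.cos_nonpos_of_pi_div_two_le_of_le (by linarith [Real.pi_pos]) (by linarith)
    nlinarith [Real.cosh_pos s, mul_nonpos_of_nonneg_of_nonpos (Real.cosh_pos s).le hc]

private lemma ccrl_sep {k l : ℕ} (hk : 2 ≤ k) (hkl : k < l) :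
    (2 * (k : ℝ) - 1) * π / 2 + π * Real.exp (-((k : ℝ) - 1) * π) <
      (2 * (l : ℝ) - 1) * π / 2 - π * Real.exp (-((l : ℝ) - 1) * π) := by
  have hl : 2 ≤ l := le_trans hk hkl.le
  have h1 := ccrl_eps_le k hk
  have h2 := ccrl_eps_le l hl
  have hcast : (k : ℝ) + 1 ≤ (l : ℝ) := by exact_mod_cast hkl
  have hπ : (3.14 : ℝ) < π := Real.pi_gt_d2
  nlinarith

set_option maxHeartbeats 1000000 in
private lemma ccrl_local {s : ℝ} (h0 : 0 < s) (hsol : Real.cosh s * Real.cos s = 1) :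
    ∃ k : ℕ, 2 ≤ k ∧
      |s - (2 * (k : ℝ) - 1) * π / 2| ≤ π * Real.exp (-((k : ℝ) - 1) * π) := by
  have hπ : 0 < π := Real.pi_pos
  have hπ2 : (3.14 : ℝ) < π := Real.pi_gt_d2
  have hπ3 : π < 3.15 := Real.pi_lt_d2
  set k := ⌈s / π⌉₊ with hkdef
  have hk1 : 1 ≤ k := Nat.ceil_pos.mpr (div_pos h0 hπ)
  have hsle : s ≤ (k : ℝ) * π := by
    have h := Nat.le_ceil (s / π)
    rw [← hkdef] at h
    calc s = s / π * π := by field_simp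
    _ ≤ (k : ℝ) * π := mul_le_mul_of_nonneg_right h hπ.le
  have hsgt : ((k : ℝ) - 1) * π < s := by
    have h := Nat.ceil_lt_add_one (le_of_lt (div_pos h0 hπ))
    rw [← hkdef] at h
    have h' : ((k : ℝ) - 1) < s / π := by linarith
    calc ((k : ℝ) - 1) * π < s / π * π := mul_lt_mul_of_pos_right h' hπ
    _ = s := by field_simp
  rcases eq_or_lt_of_le hk1 with hk | hk2
  · exfalso
    have hs : s ≤ π := by
      rw [← hk] at hsle
      simpa using hsle
    exact absurd hsol (ne_of_lt (ccrl_lt_one h0 hs))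
  · refine ⟨k, hk2, ?_⟩
    by_contra habs
    push_neg at habs
    set a := (2 * (k : ℝ) - 1) * π / 2 with ha
    set ε := π * Real.exp (-((k : ℝ) - 1) * π) with hε
    have hεpos : 0 < ε := by rw [hε]; positivity
    have hεle : ε ≤ 1 / 6 := ccrl_eps_le k hk2
    have hk2' : (2 : ℝ) ≤ (k : ℝ) := by exact_mod_cast hk2
    have hδ1 : -(π / 2) < s - a := by rw [ha]; nlinarith
    have hδ2 : s - a ≤ π / 2 := by rw [ha]; nlinarith
    have hage : 3 * π / 2 ≤ a := by rw [ha]; nlinarith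
    set c : ℝ := (-1 : ℝ) ^ k with hc
    have hcos : Real.cos s = c * Real.sin (s - a) := by
      conv_lhs => rw [show s = (2 * (k : ℝ) - 1) * π / 2 + (s - a) by rw [← ha]; ring]
      rw [ccrl_cos_shift]
    have hcoshpos : 0 < Real.cosh s := Real.cosh_pos s
    rcases lt_or_ge (s - a) 0 with hneg | hpos
    · -- s below a: u = a - s ∈ (ε, π/2)
      rw [abs_of_neg (by linarith : s - a < 0)] at habs
      have hu1 : ε < a - s := by linarith
      have hu2 : a - s ≤ π / 2 := by linarith
      have hkey := ccrl_hard k hk2 (u := a - s) hu1.le hu2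
      have hrw : (2 * (k : ℝ) - 1) * π / 2 - (a - s) = s := by rw [← ha]; ring
      rw [hrw] at hkey
      have hsin : Real.sin (s - a) = -Real.sin (a - s) := by
        rw [show s - a = -(a - s) by ring, Real.sin_neg]
      have hsinpos : 0 < Real.sin (a - s) :=
        Real.sin_pos_of_pos_of_lt_pi (by linarith) (by linarith)
      rw [hcos, hsin] at hsol
      rcases neg_one_pow_eq_or ℝ k with h | h <;> rw [← hc] at h <;> rw [h] at hsol
      · nlinarith
      · nlinarith
    · -- s above a: δ = s - a ∈ (ε, π/2]
      rw [abs_of_nonneg (by linarith : (0:ℝ) ≤ s - a)] at habs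
      have hkey := ccrl_hard k hk2 (u := s - a) habs.le hδ2
      have hrw : (2 * (k : ℝ) - 1) * π / 2 - (s - a) = a - (s - a) := by rw [← ha]
      rw [hrw] at hkey
      have hsinpos : 0 < Real.sin (s - a) :=
        Real.sin_pos_of_pos_of_lt_pi (by linarith) (by linarith)
      have hcm : Real.cosh (a - (s - a)) ≤ Real.cosh s := by
        rw [Real.cosh_le_cosh, abs_of_nonneg (by linarith), abs_of_nonneg (by linarith)]
        linarith
      have hbig : 1 < Real.cosh s * Real.sin (s - a) :=
        lt_of_lt_of_le hkey (mul_le_mul_of_nonneg_right hcm hsinpos.le)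
      rw [hcos] at hsol
      rcases neg_one_pow_eq_or ℝ k with h | h <;> rw [← hc] at h <;> rw [h] at hsol
      · nlinarith
      · nlinarith

set_option maxHeartbeats 1000000 in
private lemma ccrl_unique (k : ℕ) (hk : 2 ≤ k) (a ε : ℝ)
    (ha : a = (2 * (k : ℝ) - 1) * π / 2) (hε : ε = π * Real.exp (-((k : ℝ) - 1) * π))
    {s₁ s₂ : ℝ} (h₁ : |s₁ - a| ≤ ε) (h₂ : |s₂ - a| ≤ ε)
    (e₁ : Real.cosh s₁ * Real.cos s₁ = 1) (e₂ : Real.cosh s₂ * Real.cos s₂ = 1) :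
    s₁ = s₂ := by
  have hεpos : 0 < ε := by rw [hε]; positivity
  have hεle : ε ≤ 1 / 6 := hε ▸ ccrl_eps_le k hk
  set c : ℝ := (-1 : ℝ) ^ k with hc
  have hc2 : c * c = 1 := by
    rcases neg_one_pow_eq_or ℝ k with h | h <;> rw [hc, h] <;> norm_num
  have hmono : StrictMonoOn (fun s => c * (Real.cosh s * Real.cos s)) (Icc (a - ε) (a + ε)) := by
    apply strictMonoOn_of_deriv_pos (convex_Icc _ _) (by fun_prop)
    intro x hx
    rw [interior_Icc] at hx
    have hd : HasDerivAt (fun s => c * (Real.cosh s * Real.cos s))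
        (c * (Real.sinh x * Real.cos x + Real.cosh x * -Real.sin x)) x :=
      ((Real.hasDerivAt_cosh x).mul (Real.hasDerivAt_cos x)).const_mul c
    rw [hd.deriv]
    have hxa : x = (2 * (k : ℝ) - 1) * π / 2 + (x - a) := by rw [ha]; ring
    have hcos : Real.cos x = c * Real.sin (x - a) := by
      conv_lhs => rw [hxa]
      rw [ccrl_cos_shift]
    have hsin : Real.sin x = -(c * Real.cos (x - a)) := by
      conv_lhs => rw [hxa]
      rw [ccrl_sin_shift]
    have hδ : |x - a| < ε := by
      rw [abs_lt]; constructor <;> [linarith [hx.1]; linarith [hx.2]]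
    have hsinδ : |Real.sin (x - a)| ≤ ε :=
      le_trans Real.abs_sin_le_abs hδ.le
    have hcosδ : 1 - ε ^ 2 / 2 ≤ Real.cos (x - a) := by
      have h1 := Real.one_sub_sq_div_two_le_cos (x := x - a)
      have hab := abs_le.mp hδ.le
      have h2 : (x - a) ^ 2 ≤ ε ^ 2 := sq_le_sq' hab.1 hab.2
      linarith
    have hsinh : |Real.sinh x| ≤ Real.cosh x := by
      rw [abs_le]
      constructor
      · have := Real.cosh_add_sinh x
        have := Real.exp_pos x
        linarith
      · have := Real.cosh_sub_sinh x
        have := Real.exp_pos (-x)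
        linarith
    have hprod : |Real.sinh x * Real.sin (x - a)| ≤ Real.cosh x * ε := by
      rw [abs_mul]
      exact mul_le_mul hsinh hsinδ (abs_nonneg _) (Real.cosh_pos x).le
    have hcp : 0 < Real.cosh x := Real.cosh_pos x
    rw [hcos, hsin]
    have hrw : c * (Real.sinh x * (c * Real.sin (x - a)) +
        Real.cosh x * - -(c * Real.cos (x - a))) =
        (c * c) * (Real.sinh x * Real.sin (x - a) + Real.cosh x * Real.cos (x - a)) := by
      ring
    rw [hrw, hc2, one_mul]
    have habs := abs_le.mp hprod
    nlinarith
  have hs₁ : s₁ ∈ Icc (a - ε) (a + ε) := by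
    rw [abs_le] at h₁; constructor <;> linarith [h₁.1, h₁.2]
  have hs₂ : s₂ ∈ Icc (a - ε) (a + ε) := by
    rw [abs_le] at h₂; constructor <;> linarith [h₂.1, h₂.2]
  apply hmono.injOn hs₁ hs₂
  simp only [e₁, e₂]

set_option maxHeartbeats 1000000 in
private lemma ccrl_exists (k : ℕ) (hk : 2 ≤ k) (a ε : ℝ)
    (ha : a = (2 * (k : ℝ) - 1) * π / 2) (hε : ε = π * Real.exp (-((k : ℝ) - 1) * π)) :
    ∃ s : ℝ, 0 < s ∧ |s - a| ≤ ε ∧ Real.cosh s * Real.cos s = 1 := by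
  have hεpos : 0 < ε := by rw [hε]; positivity
  have hεle : ε ≤ 1 / 6 := hε ▸ ccrl_eps_le k hk
  have hπ : (3.14 : ℝ) < π := Real.pi_gt_d2
  have hπ' : π < 3.15 := Real.pi_lt_d2
  have hk2 : (2 : ℝ) ≤ (k : ℝ) := by exact_mod_cast hk
  have hage : 3 * π / 2 ≤ a := by rw [ha]; nlinarith
  set c : ℝ := (-1 : ℝ) ^ k with hc
  have hc2 : c * c = 1 := by
    rcases neg_one_pow_eq_or ℝ k with h | h <;> rw [hc, h] <;> norm_num
  have hc1 : |c| = 1 := by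
    rcases neg_one_pow_eq_or ℝ k with h | h <;> rw [hc, h] <;> norm_num
  have hεπ : ε ≤ π / 2 := by linarith
  have hkey : 1 < Real.cosh (a - ε) * Real.sin ε := by
    rw [ha]; exact ccrl_hard k hk (le_of_eq hε.symm) hεπ
  have hsinε : 0 < Real.sin ε := Real.sin_pos_of_pos_of_lt_pi hεpos (by linarith)
  -- boundary values of g = c * (cosh * cos)
  have hcosm : Real.cos (a - ε) = -(c * Real.sin ε) := by
    have hxa : a - ε = (2 * (k : ℝ) - 1) * π / 2 + (-ε) := by rw [ha]; ring
    rw [hxa, ccrl_cos_shift, Real.sin_neg]; ring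
  have hcosp : Real.cos (a + ε) = c * Real.sin ε := by
    have hxa : a + ε = (2 * (k : ℝ) - 1) * π / 2 + ε := by rw [ha]
    rw [hxa, ccrl_cos_shift]
  have hgm : c * (Real.cosh (a - ε) * Real.cos (a - ε)) = -(Real.cosh (a - ε) * Real.sin ε) := by
    rw [hcosm]
    linear_combination (-(Real.cosh (a - ε) * Real.sin ε)) * hc2
  have hgp : c * (Real.cosh (a + ε) * Real.cos (a + ε)) = Real.cosh (a + ε) * Real.sin ε := by
    rw [hcosp]
    linear_combination (Real.cosh (a + ε) * Real.sin ε) * hc2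
  have hcoshle : Real.cosh (a - ε) ≤ Real.cosh (a + ε) := by
    rw [Real.cosh_le_cosh]
    rw [abs_of_nonneg (by linarith), abs_of_nonneg (by linarith)]
    linarith
  have hup : 1 < Real.cosh (a + ε) * Real.sin ε := by
    calc 1 < Real.cosh (a - ε) * Real.sin ε := hkey
    _ ≤ Real.cosh (a + ε) * Real.sin ε := by
        apply mul_le_mul_of_nonneg_right hcoshle hsinε.le
  have hcmem : c ∈ Ioo (c * (Real.cosh (a - ε) * Real.cos (a - ε)))
      (c * (Real.cosh (a + ε) * Real.cos (a + ε))) := by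
    rw [hgm, hgp]
    have := abs_le.mp hc1.le
    constructor
    · linarith
    · linarith
  have hcont : ContinuousOn (fun s => c * (Real.cosh s * Real.cos s)) (Icc (a - ε) (a + ε)) := by
    fun_prop
  have hsub := intermediate_value_Ioo (by linarith : a - ε ≤ a + ε) hcont
  obtain ⟨s, hsmem, hgs⟩ := hsub hcmem
  refine ⟨s, by linarith [hsmem.1], ?_, ?_⟩
  · rw [abs_le]; constructor <;> [linarith [hsmem.1]; linarith [hsmem.2]]
  · have hcne : c ≠ 0 := by
      intro h; rw [h] at hc1; norm_num at hc1
    have : c * (Real.cosh s * Real.cos s) = c * 1 := by rw [mul_one]; exact hgs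
    exact mul_left_cancel₀ hcne this

theorem cosh_cos_roots_localization (t : ℕ → ℝ)
    (hpos : ∀ k, 2 ≤ k → 0 < t k)
    (hmono : ∀ k l, 2 ≤ k → k < l → t k < t l)
    (hsol : ∀ k, 2 ≤ k → Real.cosh (t k) * Real.cos (t k) = 1)
    (hall : ∀ s : ℝ, 0 < s → Real.cosh s * Real.cos s = 1 → ∃ k, 2 ≤ k ∧ t k = s) :
    3 * Real.pi / 2 < t 2 ∧
      ∀ k : ℕ, 2 ≤ k →
        |t k - (2 * (k : ℝ) - 1) * Real.pi / 2| ≤ Real.pi * Real.exp (-((k : ℝ) - 1) * Real.pi) := by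
  constructor
  · exact ccrl_gt (hpos 2 le_rfl) (hsol 2 le_rfl)
  · intro k hk
    induction k, hk using Nat.le_induction with
    | base =>
      obtain ⟨j, hj2, hj⟩ := ccrl_local (hpos 2 le_rfl) (hsol 2 le_rfl)
      rcases eq_or_lt_of_le hj2 with hj2' | hj2'
      · rw [← hj2'] at hj
        exact_mod_cast hj
      · exfalso
        obtain ⟨s, hs0, hsI, hse⟩ := ccrl_exists 2 le_rfl _ _ rfl rfl
        obtain ⟨m, hm2, hm⟩ := hall s hs0 hse
        have ht2s : t 2 ≤ s := by
          rcases eq_or_lt_of_le hm2 with h | h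
          · rw [h]; exact le_of_eq hm
          · rw [← hm]; exact (hmono 2 m le_rfl h).le
        have h1 := abs_le.mp hj
        have h2 := abs_le.mp hsI
        have hsep := ccrl_sep (le_rfl : 2 ≤ 2) hj2'
        norm_num at h1 h2 hsep ⊢
        linarith [h1.1, h2.2]
    | succ n hn ih =>
      obtain ⟨j, hj2, hj⟩ := ccrl_local (hpos (n + 1) (by omega)) (hsol (n + 1) (by omega))
      have h1 := abs_le.mp hj
      have ihb := abs_le.mp ih
      have htn : t n < t (n + 1) := hmono n (n + 1) hn (by omega)
      rcases lt_trichotomy j (n + 1) with hlt | heq | hgt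
      · exfalso
        rcases eq_or_lt_of_le (show j ≤ n by omega) with hjn | hjn
        · -- j = n : both t n and t (n+1) in interval n, contradiction with strict mono
          subst hjn
          have heqt : t (j + 1) = t j :=
            ccrl_unique j (by omega) _ _ rfl rfl hj ih (hsol (j + 1) (by omega))
              (hsol j (by omega))
          linarith
        · have hsep := ccrl_sep hj2 hjn
          linarith [h1.2, ihb.1]
      · subst heq
        exact hj
      · exfalso
        obtain ⟨s, hs0, hsI, hse⟩ := ccrl_exists (n + 1) (by omega) _ _ rfl rfl
        obtain ⟨m, hm2, hm⟩ := hall s hs0 hse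
        have h2 := abs_le.mp hsI
        rcases le_or_gt m n with hmn | hmn
        · have hsn : s ≤ t n := by
            rcases eq_or_lt_of_le hmn with h | h
            · rw [← hm, h]
            · rw [← hm]; exact (hmono m n hm2 h).le
          have hsep := ccrl_sep hn (show n < n + 1 by omega)
          linarith [ihb.2, h2.1]
        · have hts : t (n + 1) ≤ s := by
            rcases eq_or_lt_of_le (show n + 1 ≤ m by omega) with h | h
            · rw [← hm, ← h]
            · rw [← hm]; exact (hmono (n + 1) m (by omega) h).le
          have hsep := ccrl_sep (show 2 ≤ n + 1 by omega) hgt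
          linarith [h1.1, h2.2]
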